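/- Fix n, c ∈ ℕ and λ > 0. Let ℓ_s, ℓ_t : Fin n → Fin c be source and target label assignments such that for every label p, the class sizes agree: n_p := #{i : ℓ_s(i) = p} = #{i : ℓ_t(i) = p}. Let K_Y^{ss}, K_Y^{tt} be the delta-kernel Gram matrices of ℓ_s and ℓ_t respectively (entry (i,j) equals 1 if the two labels agree, else 0), and let K_Y^{ts} be the n×n matrix with (K_Y^{ts})_{ij} = 1 if ℓ_t(i) = ℓ_s(j) and 0 otherwise. Then for arbitrary real n×n matrices K_X^{ss}, K_X^{tt}, K_X^{st}: tr(K_Y^{ss}(K_Y^{ss}+λI)^{-1} K_X^{ss} (K_Y^{ss}+λI)^{-1}) + tr(K_Y^{tt}(K_Y^{tt}+λI)^{-1} K_X^{tt} (K_Y^{tt}+λI)^{-1}) − 2·tr(K_Y^{ts}(K_Y^{ss}+λI)^{-1} K_X^{st} (K_Y^{tt}+λI)^{-1}) = Σ_{p=1}^{c} (λ + n_p)^{-2} · [ Σ_{i,j : ℓ_s(i)=ℓ_s(j)=p} (K_X^{ss})_{ij} + Σ_{i,j : ℓ_t(i)=ℓ_t(j)=p} (K_X^{tt})_{ij} − 2·Σ_{i,j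 : ℓ_s(i)=p, ℓ_t(j)=p} (K_X^{st})_{ij} ]. -/
import Mathlib


open Matrix Finset


namespace CmmdAux

variable {n c : ℕ}

noncomputable def D2 (α β : Fin n → Fin c) (w : Fin c → ℝ) : Matrix (Fin n) (Fin n) ℝ :=
  Matrix.of fun i j => if α i = β j then w (α i) else 0

noncomputable def cnt (β : Fin n → Fin c) (p : Fin c) : ℝ :=
  ((univ.filter fun i => β i = p).card : ℝ)

lemma D2_congr (α β : Fin n → Fin c) {w v : Fin c → ℝ} (h : ∀ p, w p = v p) :
    D2 α β w = D2 α β v := by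
  ext i j; simp only [D2, of_apply, h]

lemma D2_mul_D2 (α β γ : Fin n → Fin c) (w v : Fin c → ℝ) :
    D2 α β w * D2 β γ v = D2 α γ (fun p => cnt β p * w p * v p) := by
  ext i j
  simp only [D2, mul_apply, of_apply]
  have hterm : ∀ k, (if α i = β k then w (α i) else 0) * (if β k = γ j then v (β k) else 0)
      = if β k = α i then (if α i = γ j then w (α i) * v (α i) else 0) else 0 := by
    intro k
    rcases eq_or_ne (β k) (α i) with hk | hk
    · simp [hk]
    · rw [if_neg (fun h : α i = β k => hk h.symm), zero_mul, if_neg hk]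
  rw [Finset.sum_congr rfl fun k _ => hterm k, Finset.sum_ite, Finset.sum_const_zero,
    add_zero, Finset.sum_const, nsmul_eq_mul]
  split_ifs with h
  · simp only [cnt]; ring
  · simp

lemma D2_add (α β : Fin n → Fin c) (w v : Fin c → ℝ) :
    D2 α β w + D2 α β v = D2 α β (fun p => w p + v p) := by
  ext i j; simp only [D2, Matrix.add_apply, of_apply]; split_ifs <;> simp

lemma D2_sub (α β : Fin n → Fin c) (w v : Fin c → ℝ) :
    D2 α β w - D2 α β v = D2 α β (fun p => w p - v p) := by
  ext i j; simp only [D2, Matrix.sub_apply, of_apply]; split_ifs <;> simp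

lemma D2_smul (α β : Fin n → Fin c) (r : ℝ) (w : Fin c → ℝ) :
    r • D2 α β w = D2 α β (fun p => r * w p) := by
  ext i j; simp only [D2, Matrix.smul_apply, of_apply, smul_eq_mul]; split_ifs <;> simp

lemma D2_zero (α β : Fin n → Fin c) : D2 α β (fun _ => 0) = 0 := by
  ext i j; simp [D2]

lemma cnt_nonneg (β : Fin n → Fin c) (p : Fin c) : 0 ≤ cnt β p := Nat.cast_nonneg _

section withLam

variable (lam : ℝ)

/-- right inverse identity for the regularized kernel matrix -/
lemma right_inv' (ℓ : Fin n → Fin c) (b : Fin c → ℝ)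
    (hb : ∀ p, lam * b p + cnt ℓ p * b p = 1) (hlam : 0 < lam) :
    (D2 ℓ ℓ (fun _ => 1) + lam • (1 : Matrix (Fin n) (Fin n) ℝ)) *
      (lam⁻¹ • ((1 : Matrix (Fin n) (Fin n) ℝ) - D2 ℓ ℓ b)) = 1 := by
  rw [mul_smul_comm]
  have expand : (D2 ℓ ℓ (fun _ => (1:ℝ)) + lam • (1 : Matrix (Fin n) (Fin n) ℝ)) *
      ((1 : Matrix (Fin n) (Fin n) ℝ) - D2 ℓ ℓ b)
      = D2 ℓ ℓ (fun _ => (1:ℝ)) + lam • (1 : Matrix (Fin n) (Fin n) ℝ)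
        - (D2 ℓ ℓ (fun p => cnt ℓ p * 1 * b p) + lam • D2 ℓ ℓ b) := by
    rw [mul_sub, mul_one, add_mul, D2_mul_D2, smul_mul_assoc, one_mul]
  rw [expand]
  have h1 : D2 ℓ ℓ (fun _ => (1:ℝ)) - (D2 ℓ ℓ (fun p => cnt ℓ p * 1 * b p) + lam • D2 ℓ ℓ b)
      = 0 := by
    rw [D2_smul, D2_add, D2_sub,
      show (fun p => (1:ℝ) - (cnt ℓ p * 1 * b p + lam * b p)) = fun _ => (0:ℝ) from
        funext fun p => by linear_combination - hb p, D2_zero]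
  have h2 : D2 ℓ ℓ (fun _ => (1:ℝ)) + lam • (1 : Matrix (Fin n) (Fin n) ℝ)
      - (D2 ℓ ℓ (fun p => cnt ℓ p * 1 * b p) + lam • D2 ℓ ℓ b)
      = lam • (1 : Matrix (Fin n) (Fin n) ℝ) := by
    rw [add_sub_right_comm, h1]; abel
  rw [h2, smul_smul, inv_mul_cancel₀ hlam.ne', one_smul]

lemma mul_N' (α ℓ : Fin n → Fin c) (b : Fin c → ℝ)
    (hb : ∀ p, lam * b p + cnt ℓ p * b p = 1) (hlam : 0 < lam) :
    D2 α ℓ (fun _ => 1) * (lam⁻¹ • ((1 : Matrix (Fin n) (Fin n) ℝ) - D2 ℓ ℓ b))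
      = D2 α ℓ b := by
  rw [mul_smul_comm, mul_sub, mul_one, D2_mul_D2, D2_sub, D2_smul]
  refine D2_congr _ _ fun p => ?_
  have h1 : (1:ℝ) - cnt ℓ p * 1 * b p = lam * b p := by linear_combination - hb p
  rw [h1, inv_mul_cancel_left₀ hlam.ne']

lemma N_mul' (ℓ γ : Fin n → Fin c) (b : Fin c → ℝ)
    (hb : ∀ p, lam * b p + cnt ℓ p * b p = 1) (hlam : 0 < lam) :
    (lam⁻¹ • ((1 : Matrix (Fin n) (Fin n) ℝ) - D2 ℓ ℓ b)) * D2 ℓ γ b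
      = D2 ℓ γ (fun p => b p * b p) := by
  rw [smul_mul_assoc, sub_mul, one_mul, D2_mul_D2, D2_sub, D2_smul]
  refine D2_congr _ _ fun p => ?_
  have h1 : b p - cnt ℓ p * b p * b p = lam * (b p * b p) := by
    linear_combination (- b p) * hb p
  rw [h1, inv_mul_cancel_left₀ hlam.ne']

lemma trace_D2_mul (α β : Fin n → Fin c) (w : Fin c → ℝ) (M : Matrix (Fin n) (Fin n) ℝ) :
    (D2 α β w * M).trace
      = ∑ p : Fin c, w p * ∑ i ∈ univ.filter fun i => β i = p,
          ∑ j ∈ univ.filter fun j => α j = p, M i j := by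
  rw [Matrix.trace]
  simp only [Matrix.diag, mul_apply, D2, of_apply]
  rw [Finset.sum_comm]
  have hf := Finset.sum_fiberwise (univ : Finset (Fin n)) β
    (fun j : Fin n => ∑ k : Fin n, (if α k = β j then w (α k) else 0) * M j k)
  rw [← hf]
  refine Finset.sum_congr rfl fun p _ => ?_
  rw [Finset.mul_sum]
  refine Finset.sum_congr rfl fun j hj => ?_
  rw [Finset.mem_filter] at hj
  calc ∑ k : Fin n, (if α k = β j then w (α k) else 0) * M j k
      = ∑ k : Fin n, (if α k = p then w p * M j k else 0) := by
        refine Finset.sum_congr rfl fun k _ => ?_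
        rcases eq_or_ne (α k) p with h | h
        · rw [if_pos (h.trans hj.2.symm), if_pos h, h]
        · rw [if_neg (fun he => h (he.trans hj.2)), if_neg h, zero_mul]
    _ = ∑ k ∈ univ.filter fun k => α k = p, w p * M j k :=
        (Finset.sum_filter _ _).symm
    _ = w p * ∑ k ∈ univ.filter fun k => α k = p, M j k := by
        rw [Finset.mul_sum]

end withLam

end CmmdAux

/-- **Closed form of the empirical conditional MMD with the Kronecker delta label kernel
(Proposition 3).** Let `ℓs, ℓt : Fin n → Fin c` be source and target label assignments with
equal class sizes `n_p`, let `Kss, Ktt` be the delta-kernel Gram matrices of `ℓs` and `ℓt`,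
and let `Kts i j = 1` iff `ℓt i = ℓs j`. Then for arbitrary feature kernel matrices
`KXss, KXtt, KXst`, the regularized conditional MMD trace expression equals the class-wise
weighted sum of within-class kernel sums. -/
theorem empirical_cmmd_delta_kernel
    (n c : ℕ) (lam : ℝ) (hlam : 0 < lam) (ℓs ℓt : Fin n → Fin c)
    (hcard : ∀ p : Fin c,
      (univ.filter fun i => ℓs i = p).card = (univ.filter fun i => ℓt i = p).card)
    (Kss Ktt Kts : Matrix (Fin n) (Fin n) ℝ)
    (hKss : ∀ i j, Kss i j = if ℓs i = ℓs j then 1 else 0)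
    (hKtt : ∀ i j, Ktt i j = if ℓt i = ℓt j then 1 else 0)
    (hKts : ∀ i j, Kts i j = if ℓt i = ℓs j then 1 else 0)
    (KXss KXtt KXst : Matrix (Fin n) (Fin n) ℝ) :
    (Kss * (Kss + lam • (1 : Matrix (Fin n) (Fin n) ℝ))⁻¹ * KXss *
        (Kss + lam • (1 : Matrix (Fin n) (Fin n) ℝ))⁻¹).trace
      + (Ktt * (Ktt + lam • (1 : Matrix (Fin n) (Fin n) ℝ))⁻¹ * KXtt *
        (Ktt + lam • (1 : Matrix (Fin n) (Fin n) ℝ))⁻¹).trace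
      - 2 * (Kts * (Kss + lam • (1 : Matrix (Fin n) (Fin n) ℝ))⁻¹ * KXst *
        (Ktt + lam • (1 : Matrix (Fin n) (Fin n) ℝ))⁻¹).trace
    = ∑ p : Fin c, ((lam + ((univ.filter fun i => ℓs i = p).card : ℝ)) ^ 2)⁻¹ *
        ((∑ i ∈ univ.filter fun i => ℓs i = p, ∑ j ∈ univ.filter fun j => ℓs j = p, KXss i j)
          + (∑ i ∈ univ.filter fun i => ℓt i = p, ∑ j ∈ univ.filter fun j => ℓt j = p, KXtt i j)
          - 2 * ∑ i ∈ univ.filter fun i => ℓs i = p, ∑ j ∈ univ.filter fun j => ℓt j = p,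
              KXst i j) := by
  classical
  open CmmdAux in
  have hcnt : ∀ p, cnt ℓt p = cnt ℓs p := fun p => by
    simp only [cnt, hcard p]
  set a : Fin c → ℝ := fun p => (lam + cnt ℓs p)⁻¹ with ha
  have hbs : ∀ p, lam * a p + cnt ℓs p * a p = 1 := fun p => by
    have h0 := cnt_nonneg ℓs p
    have h : lam + cnt ℓs p ≠ 0 := by linarith
    rw [ha, ← add_mul, mul_inv_cancel₀ h]
  have hbt : ∀ p, lam * a p + cnt ℓt p * a p = 1 := fun p => by
    rw [hcnt]; exact hbs p
  have hKss' : Kss = D2 ℓs ℓs (fun _ => 1) := by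
    ext i j; rw [hKss]; rfl
  have hKtt' : Ktt = D2 ℓt ℓt (fun _ => 1) := by
    ext i j; rw [hKtt]; rfl
  have hKts' : Kts = D2 ℓt ℓs (fun _ => 1) := by
    ext i j; rw [hKts]; rfl
  set Ns : Matrix (Fin n) (Fin n) ℝ := lam⁻¹ • (1 - D2 ℓs ℓs a) with hNs
  set Nt : Matrix (Fin n) (Fin n) ℝ := lam⁻¹ • (1 - D2 ℓt ℓt a) with hNt
  have hinvs : (Kss + lam • (1 : Matrix (Fin n) (Fin n) ℝ))⁻¹ = Ns :=
    Matrix.inv_eq_right_inv (by rw [hKss', hNs]; exact right_inv' lam ℓs a hbs hlam)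
  have hinvt : (Ktt + lam • (1 : Matrix (Fin n) (Fin n) ℝ))⁻¹ = Nt :=
    Matrix.inv_eq_right_inv (by rw [hKtt', hNt]; exact right_inv' lam ℓt a hbt hlam)
  have h1 : Kss * Ns = D2 ℓs ℓs a := by
    rw [hKss', hNs]; exact mul_N' lam ℓs ℓs a hbs hlam
  have h2 : Ktt * Nt = D2 ℓt ℓt a := by
    rw [hKtt', hNt]; exact mul_N' lam ℓt ℓt a hbt hlam
  have h3 : Kts * Ns = D2 ℓt ℓs a := by
    rw [hKts', hNs]; exact mul_N' lam ℓt ℓs a hbs hlam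
  have h4 : Ns * D2 ℓs ℓs a = D2 ℓs ℓs (fun p => a p * a p) := by
    rw [hNs]; exact N_mul' lam ℓs ℓs a hbs hlam
  have h5 : Nt * D2 ℓt ℓt a = D2 ℓt ℓt (fun p => a p * a p) := by
    rw [hNt]; exact N_mul' lam ℓt ℓt a hbt hlam
  have h6 : Nt * D2 ℓt ℓs a = D2 ℓt ℓs (fun p => a p * a p) := by
    rw [hNt]; exact N_mul' lam ℓt ℓs a hbt hlam
  rw [hinvs, hinvt]
  have e1 : (Kss * Ns * KXss * Ns).trace
      = (D2 ℓs ℓs (fun p => a p * a p) * KXss).trace := by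
    rw [Matrix.trace_mul_comm, ← Matrix.mul_assoc, h1, h4]
  have e2 : (Ktt * Nt * KXtt * Nt).trace
      = (D2 ℓt ℓt (fun p => a p * a p) * KXtt).trace := by
    rw [Matrix.trace_mul_comm, ← Matrix.mul_assoc, h2, h5]
  have e3 : (Kts * Ns * KXst * Nt).trace
      = (D2 ℓt ℓs (fun p => a p * a p) * KXst).trace := by
    rw [Matrix.trace_mul_comm, ← Matrix.mul_assoc, h3, h6]
  rw [e1, e2, e3, trace_D2_mul, trace_D2_mul, trace_D2_mul]
  rw [Finset.mul_sum, ← Finset.sum_add_distrib, ← Finset.sum_sub_distrib]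
  refine Finset.sum_congr rfl fun p _ => ?_
  have hw : ((lam + ((univ.filter fun i => ℓs i = p).card : ℝ)) ^ 2)⁻¹ = a p * a p := by
    rw [ha, sq, mul_inv]; rfl
  rw [hw]; ring
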